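/- Let q = 2^m with m ≥ 2. The set T₀* = {x ∈ F_q^* : Tr(x) = 0} is a (q-1, q/2 - 1, q/4 - 1) difference set in the multiplicative group F_q^*; that is, |T₀*| = q/2 - 1 and for every g ∈ F_q^* with g ≠ 1, the number of ordered pairs (x,y) ∈ T₀* × T₀* with x = g y equals q/4 - 1. -/

import Mathlib

private lemma card_ker_aux {F H : Type*} [AddCommGroup F] [Finite F] [AddCommGroup H]
    (φ : F →+ H) (hs : Function.Surjective φ) :
    Nat.card F = Nat.card H * Nat.card φ.ker := by
  rw [AddSubgroup.card_eq_card_quotient_mul_card_addSubgroup φ.ker]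
  congr 1
  exact Nat.card_congr (QuotientAddGroup.quotientKerEquivOfSurjective φ hs).toEquiv

private lemma trace_nondeg (F : Type*) [Field F] [Fintype F] [Algebra (ZMod 2) F]
    {a : F} (ha : a ≠ 0) : ∃ b : F, Algebra.trace (ZMod 2) F (a * b) ≠ 0 := by
  have : Fact (Nat.Prime 2) := ⟨by norm_num⟩
  have : FiniteDimensional (ZMod 2) F := Module.Finite.of_finite
  have htr := (traceForm_nondegenerate (ZMod 2) F).1 a
  simp_rw [Algebra.traceForm_apply] at htr
  by_contra! hf
  exact ha (htr hf)

theorem trace_zero_units_difference_set (m : ℕ) (hm : 2 ≤ m)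
    (F : Type*) [Field F] [Fintype F] [Algebra (ZMod 2) F] (hcard : Fintype.card F = 2 ^ m) :
    Nat.card {x : F | x ≠ 0 ∧ Algebra.trace (ZMod 2) F x = 0} = 2 ^ m / 2 - 1 ∧
    ∀ g : F, g ≠ 0 → g ≠ 1 →
      Nat.card {p : F × F |
          (p.1 ≠ 0 ∧ Algebra.trace (ZMod 2) F p.1 = 0) ∧
          (p.2 ≠ 0 ∧ Algebra.trace (ZMod 2) F p.2 = 0) ∧ p.1 = g * p.2} =
        2 ^ m / 4 - 1 := by
  have htwo : ∀ x : ZMod 2, x = 0 ∨ x = 1 := by decide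
  have hq : Nat.card F = 2 ^ m := by rw [Nat.card_eq_fintype_card, hcard]
  set T := Algebra.trace (ZMod 2) F with hTdef
  obtain ⟨b₀, hb₀⟩ := trace_nondeg F (one_ne_zero : (1:F) ≠ 0)
  rw [one_mul] at hb₀
  have hb₀1 : T b₀ = 1 := (htwo _).resolve_left hb₀
  have h2 : (2 : F) = 0 := by
    have h := map_natCast (algebraMap (ZMod 2) F) 2
    rw [show ((2:ℕ) : ZMod 2) = 0 from by decide, map_zero] at h
    exact_mod_cast h.symm
  constructor
  · set φ : F →+ ZMod 2 := T.toAddMonoidHom with hφdef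
    have hφ : ∀ x, φ x = T x := fun _ => rfl
    have hsurj : Function.Surjective φ := by
      intro c
      rcases htwo c with rfl | rfl
      · exact ⟨0, map_zero _⟩
      · exact ⟨b₀, by rw [hφ, hb₀1]⟩
    have hk := card_ker_aux φ hsurj
    rw [hq, Nat.card_zmod] at hk
    have hset : {x : F | x ≠ 0 ∧ T x = 0} = (φ.ker : Set F) \ {0} := by
      ext x
      simp only [Set.mem_setOf_eq, Set.mem_diff, SetLike.mem_coe, AddMonoidHom.mem_ker, hφ,
        Set.mem_singleton_iff]
      tauto
    have h0mem : (0:F) ∈ (φ.ker : Set F) := by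
      simp [AddMonoidHom.mem_ker]
    rw [Nat.card_coe_set_eq, hset, Set.ncard_diff_singleton_of_mem h0mem]
    have hnk : (φ.ker : Set F).ncard = Nat.card φ.ker := (Nat.card_coe_set_eq _).symm
    rw [hnk, hk]
    omega
  · intro g hg0 hg1
    have hc0 : (1 : F) + g ≠ 0 := by
      intro h
      exact hg1 (by linear_combination h - h2)
    set φ : F →+ ZMod 2 × ZMod 2 :=
      { toFun := fun x => (T x, T (g * x))
        map_zero' := by simp
        map_add' := fun x y => by
          simp [mul_add, map_add, Prod.ext_iff] } with hφdef
    have hφ : ∀ x, φ x = (T x, T (g * x)) := fun _ => rfl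
    obtain ⟨u, hu⟩ := trace_nondeg F hc0
    have hu' : T u + T (g * u) = 1 := by
      have hrw : (1 + g) * u = u + g * u := by ring
      rw [hrw, map_add] at hu
      exact (htwo _).resolve_left hu
    obtain ⟨e, he⟩ := trace_nondeg F hg0
    have he1 : T (g * e) = 1 := (htwo _).resolve_left he
    have key : (∃ x, φ x = (1,0)) ∧ (∃ y, φ y = (0,1)) := by
      rcases htwo (T u) with h0 | h1
      · have hβ : T (g * u) = 1 := by rwa [h0, zero_add] at hu'
        refine ⟨?_, ⟨u, by rw [hφ, h0, hβ]⟩⟩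
        rcases htwo (T (g * b₀)) with hδ | hδ
        · exact ⟨b₀, by rw [hφ, hb₀1, hδ]⟩
        · refine ⟨u + b₀, ?_⟩
          rw [hφ, map_add, mul_add, map_add, h0, hβ, hb₀1, hδ]
          decide
      · have hβ : T (g * u) = 0 := by
          rcases htwo (T (g * u)) with h | h
          · exact h
          · rw [h1, h] at hu'; exact absurd hu' (by decide)
        refine ⟨⟨u, by rw [hφ, h1, hβ]⟩, ?_⟩
        rcases htwo (T e) with hε | hε
        · exact ⟨e, by rw [hφ, hε, he1]⟩
        · refine ⟨u + e, ?_⟩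
          rw [hφ, map_add, mul_add, map_add, h1, hβ, hε, he1]
          decide
    obtain ⟨⟨x10, hx10⟩, ⟨x01, hx01⟩⟩ := key
    have hsurj : Function.Surjective φ := by
      intro v
      have hv : ∀ w : ZMod 2 × ZMod 2, w = (0,0) ∨ w = (1,0) ∨ w = (0,1) ∨ w = (1,1) := by decide
      rcases hv v with rfl | rfl | rfl | rfl
      · exact ⟨0, map_zero φ⟩
      · exact ⟨x10, hx10⟩
      · exact ⟨x01, hx01⟩
      · exact ⟨x10 + x01, by rw [map_add, hx10, hx01]; decide⟩
    have hk := card_ker_aux φ hsurj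
    rw [hq] at hk
    have h4 : Nat.card (ZMod 2 × ZMod 2) = 4 := by simp [Nat.card_prod, Nat.card_zmod]
    rw [h4] at hk
    have hequiv : Nat.card {p : F × F |
          (p.1 ≠ 0 ∧ T p.1 = 0) ∧ (p.2 ≠ 0 ∧ T p.2 = 0) ∧ p.1 = g * p.2} =
        Nat.card {y : F | y ≠ 0 ∧ T y = 0 ∧ T (g * y) = 0} := by
      apply Nat.card_congr
      refine ⟨fun p => ⟨p.1.2, p.2.2.1.1, p.2.2.1.2, by rw [← p.2.2.2]; exact p.2.1.2⟩,
        fun y => ⟨(g * y.1, y.1), ⟨mul_ne_zero hg0 y.2.1, y.2.2.2⟩, ⟨y.2.1, y.2.2.1⟩, rfl⟩,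
        fun p => ?_, fun y => rfl⟩
      rcases p with ⟨⟨x, y⟩, h⟩
      refine Subtype.ext ?_
      show (g * y, y) = (x, y)
      rw [show x = g * y from h.2.2]
    rw [hequiv]
    have hset : {y : F | y ≠ 0 ∧ T y = 0 ∧ T (g * y) = 0} = (φ.ker : Set F) \ {0} := by
      ext y
      simp only [Set.mem_setOf_eq, Set.mem_diff, SetLike.mem_coe, AddMonoidHom.mem_ker, hφ,
        Prod.mk_eq_zero, Set.mem_singleton_iff]
      tauto
    have h0mem : (0:F) ∈ (φ.ker : Set F) := by
      simp [AddMonoidHom.mem_ker]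
    rw [Nat.card_coe_set_eq, hset, Set.ncard_diff_singleton_of_mem h0mem]
    have hnk : (φ.ker : Set F).ncard = Nat.card φ.ker := (Nat.card_coe_set_eq _).symm
    rw [hnk, hk]
    omega
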